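/- If partitions p and q of Fin n are orthogonal, then their common refinement (the meet p ⊓ q in the lattice of partitions, whose blocks are the nonempty intersections B ∩ C with B a block of p and C a block of q) is the discrete partition into singletons. -/
import Mathlib

/-- A multigraph with vertex type `V` and edge-index type `E`:
each edge has an ordered pair of endpoints. -/
structure Multigraph (V : Type*) (E : Type*) where
  ends : E → V × V

namespace Multigraph

variable {V E : Type*}

/-- A walk in a multigraph, traversing edges in either direction. -/
inductive Walk (G : Multigraph V E) : V → V → Type _
  | nil (v : V) : Walk G v v
  | cons {u v w : V} (e : E)
      (h : G.ends e = (u, v) ∨ G.ends e = (v, u)) (p : Walk G v w) : Walk G u w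

/-- The list of edges used by a walk. -/
def Walk.edges {G : Multigraph V E} : ∀ {u v : V}, G.Walk u v → List E
  | _, _, .nil _ => []
  | _, _, .cons e _ p => e :: p.edges

/-- A multigraph is connected if any two vertices are joined by a walk. -/
def Connected (G : Multigraph V E) : Prop := ∀ u v : V, Nonempty (G.Walk u v)

/-- A multigraph is acyclic if it has no closed trail of positive length
(equivalently, no cycle). -/
def Acyclic (G : Multigraph V E) : Prop :=
  ∀ (v : V) (w : G.Walk v v), w.edges.Nodup → w.edges = []

/-- A multigraph is a tree if it is acyclic and connected. -/
def IsTree (G : Multigraph V E) : Prop := G.Acyclic ∧ G.Connected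

end Multigraph

/-- The meeting graph of two partitions (setoids) of `Fin n`: vertices are
the blocks of `p` together with the blocks of `q`, and for each `i : Fin n`
there is one edge joining the `p`-block of `i` to the `q`-block of `i`. -/
def meetingGraph {n : ℕ} (p q : Setoid (Fin n)) :
    Multigraph (Quotient p ⊕ Quotient q) (Fin n) :=
  ⟨fun i => (Sum.inl (Quotient.mk p i), Sum.inr (Quotient.mk q i))⟩

/-- Two partitions are orthogonal when their meeting graph is a tree
(acyclic and connected). -/
def Orthogonal {n : ℕ} (p q : Setoid (Fin n)) : Prop :=
  (meetingGraph p q).IsTree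

/-- The number of blocks of a partition. -/
noncomputable def numBlocks {n : ℕ} (p : Setoid (Fin n)) : ℕ := Nat.card (Quotient p)

/-- The dual `P⊥` of a set of partitions. -/
def orthSet {n : ℕ} (P : Set (Setoid (Fin n))) : Set (Setoid (Fin n)) :=
  {q | ∀ p ∈ P, Orthogonal q p}

/-- if `p ⊥ q` then the common refinement `p ⊓ q` is the
discrete partition into singletons (the bottom of the partition lattice). -/
theorem orthogonal_inf_eq_bot {n : ℕ} {p q : Setoid (Fin n)}
    (h : Orthogonal p q) : p ⊓ q = ⊥ := by
  ext i j
  constructor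
  · rintro ⟨hp, hq⟩
    by_contra hij
    have hpq : (Quotient.mk p j : Quotient p) = Quotient.mk p i := Quotient.sound (p.symm hp)
    have hqq : (Quotient.mk q j : Quotient q) = Quotient.mk q i := Quotient.sound (q.symm hq)
    set G := meetingGraph p q
    have h1 : G.ends i = (Sum.inl (Quotient.mk p i), Sum.inr (Quotient.mk q i)) ∨
        G.ends i = (Sum.inr (Quotient.mk q i), Sum.inl (Quotient.mk p i)) := Or.inl rfl
    have h2 : G.ends j = (Sum.inr (Quotient.mk q i), Sum.inl (Quotient.mk p i)) ∨
        G.ends j = (Sum.inl (Quotient.mk p i), Sum.inr (Quotient.mk q i)) := by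
      right
      show (Sum.inl (Quotient.mk p j), Sum.inr (Quotient.mk q j)) = _
      rw [hpq, hqq]
    let w : G.Walk (Sum.inl (Quotient.mk p i)) (Sum.inl (Quotient.mk p i)) :=
      .cons i h1 (.cons j h2 (.nil _))
    have hnd : w.edges.Nodup := by
      show ([i, j] : List (Fin n)).Nodup
      have hij' : i ≠ j := fun e => hij (by rw [e])
      simp [hij']
    have := h.1 _ w hnd
    simp [w, Multigraph.Walk.edges] at this
  · rintro rfl
    exact ⟨p.refl i, q.refl i⟩
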